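/- Let α ∈ (0,1), n ≥ 2, and let a_0, …, a_n be independent real-valued random variables with P(a_i > 0) = α and P(a_i < 0) = 1 − α for every i. For every integer k ≥ 0, the conditional probabilities satisfy the decoupled second-order recursions u_{k,n} = α(1−α)·(u_{k−2,n−2} − u_{k,n−2}) + u_{k,n−1} and v_{k,n} = α(1−α)·(v_{k−2,n−2} − v_{k,n−2}) + v_{k,n−1}. -/

import Mathlib

open MeasureTheory ProbabilityTheory

/-- Number of sign changes of the sequence `a 0, a 1, …, a N` (there are `N`
consecutive pairs): the number of indices `0 ≤ i ≤ N - 1` with `a i * a (i+1) < 0`. -/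
noncomputable def signChanges {Ω : Type*} (a : ℕ → Ω → ℝ) (N : ℕ) (ω : Ω) : ℕ :=
  ((Finset.range N).filter fun i => a i ω * a (i + 1) ω < 0).card

/-- `u k N`: the conditional probability, given `a N > 0`, that `(a 0, …, a N)`
has exactly `k` sign changes. -/
noncomputable def condProbPos {Ω : Type*} [MeasurableSpace Ω] (μ : Measure Ω)
    (a : ℕ → Ω → ℝ) (k N : ℕ) : ℝ :=
  ((μ[|{ω | 0 < a N ω}]) {ω | signChanges a N ω = k}).toReal

/-- `v k N`: the conditional probability, given `a N < 0`, that `(a 0, …, a N)`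
has exactly `k` sign changes. -/
noncomputable def condProbNeg {Ω : Type*} [MeasurableSpace Ω] (μ : Measure Ω)
    (a : ℕ → Ω → ℝ) (k N : ℕ) : ℝ :=
  ((μ[|{ω | a N ω < 0}]) {ω | signChanges a N ω = k}).toReal

/-! ### Auxiliary definitions and lemmas -/

/-- Unconditional probability of `k` sign changes together with `a N > 0`. -/
noncomputable def pAux {Ω : Type*} [MeasurableSpace Ω] (μ : Measure Ω)
    (a : ℕ → Ω → ℝ) (k N : ℕ) : ℝ :=
  (μ ({ω | signChanges a N ω = k} ∩ a N ⁻¹' Set.Ioi 0)).toReal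

/-- Unconditional probability of `k` sign changes together with `a N < 0`. -/
noncomputable def qAux {Ω : Type*} [MeasurableSpace Ω] (μ : Measure Ω)
    (a : ℕ → Ω → ℝ) (k N : ℕ) : ℝ :=
  (μ ({ω | signChanges a N ω = k} ∩ a N ⁻¹' Set.Iio 0)).toReal

lemma signChanges_succ {Ω : Type*} (a : ℕ → Ω → ℝ) (N : ℕ) (ω : Ω) :
    signChanges a (N + 1) ω =
      signChanges a N ω + (if a N ω * a (N + 1) ω < 0 then 1 else 0) := by
  unfold signChanges
  rw [Finset.range_add_one, Finset.filter_insert]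
  split
  · rw [Finset.card_insert_of_notMem (by simp)]
  · simp

lemma measurable_signChanges {Ω : Type*} [MeasurableSpace Ω] {a : ℕ → Ω → ℝ}
    (hmeas : ∀ i, Measurable (a i)) (N : ℕ) : Measurable (signChanges a N) := by
  have h : signChanges a N = fun ω =>
      ∑ i ∈ Finset.range N, if a i ω * a (i + 1) ω < 0 then 1 else 0 := by
    funext ω; rw [signChanges, Finset.card_filter]
  rw [h]
  exact Finset.measurable_sum _ fun i _ =>
    Measurable.ite (measurableSet_lt ((hmeas i).mul (hmeas (i + 1))) measurable_const)
      measurable_const measurable_const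

lemma measurableSet_signChanges {Ω : Type*} [MeasurableSpace Ω] {a : ℕ → Ω → ℝ}
    (hmeas : ∀ i, Measurable (a i)) (N k : ℕ) :
    MeasurableSet {ω | signChanges a N ω = k} :=
  measurable_signChanges hmeas N (measurableSet_singleton k)

/-- The event that `(a 0, …, a N)` has `k` sign changes together with a sign condition on `a N`
is independent of a sign condition on `a (N+1)`. -/
lemma indep_last {Ω : Type*} [MeasurableSpace Ω] {μ : Measure Ω} {a : ℕ → Ω → ℝ}
    (hmeas : ∀ i, Measurable (a i)) {n : ℕ}
    (hindep : iIndepFun (fun i : Fin (n + 1) => a i) μ)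
    {N : ℕ} (hN : N + 1 ≤ n) (k : ℕ) {B C : Set ℝ} (hB : MeasurableSet B) (hC : MeasurableSet C) :
    μ (({ω | signChanges a N ω = k} ∩ a N ⁻¹' B) ∩ a (N + 1) ⁻¹' C) =
      μ ({ω | signChanges a N ω = k} ∩ a N ⁻¹' B) * μ (a (N + 1) ⁻¹' C) := by
  classical
  set S : Finset (Fin (n + 1)) := Finset.univ.filter (fun i => (i : ℕ) ≤ N) with hS
  set T : Finset (Fin (n + 1)) := {⟨N + 1, by omega⟩} with hT
  have hdis : Disjoint S T := by
    simp only [hS, hT, Finset.disjoint_singleton_right, Finset.mem_filter, Finset.mem_univ,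
      true_and]
    omega
  have hIF : IndepFun (fun ω (i : S) => a i ω) (fun ω (i : T) => a i ω) μ :=
    hindep.indepFun_finset S T hdis (fun i => hmeas i)
  set φ : Ω → (S → ℝ) := fun ω (i : S) => a i ω with hφ
  set ψ : Ω → (T → ℝ) := fun ω (i : T) => a i ω with hψ
  have hel : ∀ i : ℕ, (⟨min i N, by omega⟩ : Fin (n + 1)) ∈ S := by
    intro i
    simp only [hS, Finset.mem_filter, Finset.mem_univ, true_and]
    exact Nat.min_le_right i N
  set el : ℕ → S := fun i => ⟨⟨min i N, by omega⟩, hel i⟩ with hel'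
  have helval : ∀ i : ℕ, ((el i : Fin (n + 1)) : ℕ) = min i N := fun i => rfl
  set t0 : T := ⟨⟨N + 1, by omega⟩, Finset.mem_singleton_self _⟩ with ht0
  set M : Set (S → ℝ) := {x | ((Finset.range N).filter
      fun i => x (el i) * x (el (i + 1)) < 0).card = k ∧ x (el N) ∈ B} with hM'
  have hM : MeasurableSet M := by
    have h1 : MeasurableSet {x : S → ℝ | ((Finset.range N).filter
        fun i => x (el i) * x (el (i + 1)) < 0).card = k} := by
      have h2 : (fun x : S → ℝ => ((Finset.range N).filter
          fun i => x (el i) * x (el (i + 1)) < 0).card) = fun x =>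
          ∑ i ∈ Finset.range N, if x (el i) * x (el (i + 1)) < 0 then 1 else 0 := by
        funext x; rw [Finset.card_filter]
      have hmF : Measurable (fun x : S → ℝ => ((Finset.range N).filter
          fun i => x (el i) * x (el (i + 1)) < 0).card) := by
        rw [h2]
        exact Finset.measurable_sum _ fun i _ =>
          Measurable.ite (measurableSet_lt ((measurable_pi_apply (el i)).mul
            (measurable_pi_apply (el (i + 1)))) measurable_const)
            measurable_const measurable_const
      exact hmF (measurableSet_singleton k)
    exact h1.inter (hB.preimage (measurable_pi_apply (el N)))
  have hfil : ∀ ω, ((Finset.range N).filter fun i => φ ω (el i) * φ ω (el (i + 1)) < 0) =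
      (Finset.range N).filter fun i => a i ω * a (i + 1) ω < 0 := by
    intro ω
    refine Finset.filter_congr fun i hi => ?_
    have hiN : i < N := Finset.mem_range.mp hi
    have h1 : φ ω (el i) = a i ω := by
      simp only [hφ, helval, Nat.min_eq_left hiN.le]
    have h2 : φ ω (el (i + 1)) = a (i + 1) ω := by
      simp only [hφ, helval, Nat.min_eq_left hiN]
    rw [h1, h2]
  have hNel : ∀ ω, φ ω (el N) = a N ω := by
    intro ω; simp only [hφ, helval, Nat.min_self]
  have hsets : {ω | signChanges a N ω = k} ∩ a N ⁻¹' B = φ ⁻¹' M := by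
    ext ω
    simp only [Set.mem_inter_iff, Set.mem_setOf_eq, Set.mem_preimage, hM', signChanges,
      hfil ω, hNel ω]
  have hsets2 : a (N + 1) ⁻¹' C = ψ ⁻¹' ((fun y : T → ℝ => y t0) ⁻¹' C) := rfl
  rw [hsets, hsets2]
  exact hIF.measure_inter_preimage_eq_mul _ _ hM (hC.preimage (measurable_pi_apply t0))

/-- Splitting a set according to the (a.e. determined) sign of `a M`. -/
lemma measure_split {Ω : Type*} [MeasurableSpace Ω] {μ : Measure Ω} {a : ℕ → Ω → ℝ}
    (hmeas : ∀ i, Measurable (a i)) {M : ℕ} (hz : μ {ω | a M ω = 0} = 0) (T : Set Ω) :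
    μ T = μ (T ∩ a M ⁻¹' Set.Ioi 0) + μ (T ∩ a M ⁻¹' Set.Iio 0) := by
  have hPm : MeasurableSet (a M ⁻¹' Set.Ioi 0) := measurableSet_Ioi.preimage (hmeas M)
  have hNm : MeasurableSet (a M ⁻¹' Set.Iio 0) := measurableSet_Iio.preimage (hmeas M)
  have h1 : μ T = μ (T ∩ a M ⁻¹' Set.Ioi 0) + μ (T \ a M ⁻¹' Set.Ioi 0) :=
    (measure_inter_add_diff T hPm).symm
  have h2 : μ (T \ a M ⁻¹' Set.Ioi 0) =
      μ ((T \ a M ⁻¹' Set.Ioi 0) ∩ a M ⁻¹' Set.Iio 0) +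
        μ ((T \ a M ⁻¹' Set.Ioi 0) \ a M ⁻¹' Set.Iio 0) :=
    (measure_inter_add_diff _ hNm).symm
  have h3 : (T \ a M ⁻¹' Set.Ioi 0) ∩ a M ⁻¹' Set.Iio 0 = T ∩ a M ⁻¹' Set.Iio 0 := by
    ext ω
    simp only [Set.mem_inter_iff, Set.mem_diff, Set.mem_preimage, Set.mem_Ioi, Set.mem_Iio]
    constructor
    · rintro ⟨⟨h, _⟩, h'⟩; exact ⟨h, h'⟩
    · rintro ⟨h, h'⟩; exact ⟨⟨h, fun hh => absurd h' (not_lt.mpr hh.le)⟩, h'⟩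
  have h4 : μ ((T \ a M ⁻¹' Set.Ioi 0) \ a M ⁻¹' Set.Iio 0) = 0 := by
    refine measure_mono_null ?_ hz
    rintro ω ⟨⟨_, h1'⟩, h2'⟩
    simp only [Set.mem_preimage, Set.mem_Ioi, not_lt] at h1'
    simp only [Set.mem_preimage, Set.mem_Iio, not_lt] at h2'
    exact le_antisymm h1' h2'
  rw [h1, h2, h3, h4, add_zero]

/-- One-step recursion for the "positive last sign" probabilities. -/
lemma step_pos {Ω : Type*} [MeasurableSpace Ω] {μ : Measure Ω} {a : ℕ → Ω → ℝ}
    (hmeas : ∀ i, Measurable (a i)) {n : ℕ}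
    (hindep : iIndepFun (fun i : Fin (n + 1) => a i) μ)
    {M : ℕ} (hM : M + 1 ≤ n) (k : ℕ) (hz : μ {ω | a M ω = 0} = 0) :
    μ ({ω | signChanges a (M + 1) ω = k} ∩ a (M + 1) ⁻¹' Set.Ioi 0) =
      (μ ({ω | signChanges a M ω = k} ∩ a M ⁻¹' Set.Ioi 0)
        + if k = 0 then 0 else μ ({ω | signChanges a M ω = k - 1} ∩ a M ⁻¹' Set.Iio 0))
        * μ (a (M + 1) ⁻¹' Set.Ioi 0) := by
  classical
  set T : Set Ω := {ω | signChanges a (M + 1) ω = k} ∩ a (M + 1) ⁻¹' Set.Ioi 0 with hT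
  have hTP : T ∩ a M ⁻¹' Set.Ioi 0 =
      ({ω | signChanges a M ω = k} ∩ a M ⁻¹' Set.Ioi 0) ∩ a (M + 1) ⁻¹' Set.Ioi 0 := by
    ext ω
    simp only [hT, Set.mem_inter_iff, Set.mem_setOf_eq, Set.mem_preimage, Set.mem_Ioi,
      signChanges_succ a M ω]
    constructor
    · rintro ⟨⟨hsc, hp1⟩, hp0⟩
      rw [if_neg (not_lt.mpr (mul_pos hp0 hp1).le)] at hsc
      exact ⟨⟨by omega, hp0⟩, hp1⟩
    · rintro ⟨⟨hsc, hp0⟩, hp1⟩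
      exact ⟨⟨by rw [if_neg (not_lt.mpr (mul_pos hp0 hp1).le)]; omega, hp1⟩, hp0⟩
  rw [measure_split hmeas hz T, hTP]
  rcases k with _ | k'
  · have hTN : T ∩ a M ⁻¹' Set.Iio 0 = ∅ := by
      ext ω
      simp only [hT, Set.mem_inter_iff, Set.mem_setOf_eq, Set.mem_preimage, Set.mem_Ioi,
        Set.mem_Iio, Set.mem_empty_iff_false, iff_false, not_and]
      rintro ⟨hsc, hp1⟩ hn0
      rw [signChanges_succ, if_pos (mul_neg_of_neg_of_pos hn0 hp1)] at hsc
      omega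
    rw [hTN, measure_empty, if_pos rfl, add_zero, add_zero]
    exact indep_last hmeas hindep hM 0 measurableSet_Ioi measurableSet_Ioi
  · have hTN : T ∩ a M ⁻¹' Set.Iio 0 =
        ({ω | signChanges a M ω = k'} ∩ a M ⁻¹' Set.Iio 0) ∩ a (M + 1) ⁻¹' Set.Ioi 0 := by
      ext ω
      simp only [hT, Set.mem_inter_iff, Set.mem_setOf_eq, Set.mem_preimage, Set.mem_Ioi,
        Set.mem_Iio, signChanges_succ a M ω]
      constructor
      · rintro ⟨⟨hsc, hp1⟩, hn0⟩
        rw [if_pos (mul_neg_of_neg_of_pos hn0 hp1)] at hsc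
        exact ⟨⟨by omega, hn0⟩, hp1⟩
      · rintro ⟨⟨hsc, hn0⟩, hp1⟩
        exact ⟨⟨by rw [if_pos (mul_neg_of_neg_of_pos hn0 hp1)]; omega, hp1⟩, hn0⟩
    rw [hTN, if_neg (Nat.succ_ne_zero k'),
      indep_last hmeas hindep hM (k' + 1) measurableSet_Ioi measurableSet_Ioi,
      indep_last hmeas hindep hM k' measurableSet_Iio measurableSet_Ioi, ← add_mul]
    norm_num

/-- One-step recursion for the "negative last sign" probabilities. -/
lemma step_neg {Ω : Type*} [MeasurableSpace Ω] {μ : Measure Ω} {a : ℕ → Ω → ℝ}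
    (hmeas : ∀ i, Measurable (a i)) {n : ℕ}
    (hindep : iIndepFun (fun i : Fin (n + 1) => a i) μ)
    {M : ℕ} (hM : M + 1 ≤ n) (k : ℕ) (hz : μ {ω | a M ω = 0} = 0) :
    μ ({ω | signChanges a (M + 1) ω = k} ∩ a (M + 1) ⁻¹' Set.Iio 0) =
      (μ ({ω | signChanges a M ω = k} ∩ a M ⁻¹' Set.Iio 0)
        + if k = 0 then 0 else μ ({ω | signChanges a M ω = k - 1} ∩ a M ⁻¹' Set.Ioi 0))
        * μ (a (M + 1) ⁻¹' Set.Iio 0) := by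
  classical
  set T : Set Ω := {ω | signChanges a (M + 1) ω = k} ∩ a (M + 1) ⁻¹' Set.Iio 0 with hT
  have hTN : T ∩ a M ⁻¹' Set.Iio 0 =
      ({ω | signChanges a M ω = k} ∩ a M ⁻¹' Set.Iio 0) ∩ a (M + 1) ⁻¹' Set.Iio 0 := by
    ext ω
    simp only [hT, Set.mem_inter_iff, Set.mem_setOf_eq, Set.mem_preimage, Set.mem_Iio,
      signChanges_succ a M ω]
    constructor
    · rintro ⟨⟨hsc, hp1⟩, hp0⟩
      rw [if_neg (not_lt.mpr (mul_pos_of_neg_of_neg hp0 hp1).le)] at hsc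
      exact ⟨⟨by omega, hp0⟩, hp1⟩
    · rintro ⟨⟨hsc, hp0⟩, hp1⟩
      exact ⟨⟨by rw [if_neg (not_lt.mpr (mul_pos_of_neg_of_neg hp0 hp1).le)]; omega, hp1⟩, hp0⟩
  rw [measure_split hmeas hz T, hTN]
  rcases k with _ | k'
  · have hTP : T ∩ a M ⁻¹' Set.Ioi 0 = ∅ := by
      ext ω
      simp only [hT, Set.mem_inter_iff, Set.mem_setOf_eq, Set.mem_preimage, Set.mem_Ioi,
        Set.mem_Iio, Set.mem_empty_iff_false, iff_false, not_and]
      rintro ⟨hsc, hp1⟩ hn0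
      rw [signChanges_succ, if_pos (mul_neg_of_pos_of_neg hn0 hp1)] at hsc
      omega
    rw [hTP, measure_empty, if_pos rfl, zero_add, add_zero]
    exact indep_last hmeas hindep hM 0 measurableSet_Iio measurableSet_Iio
  · have hTP : T ∩ a M ⁻¹' Set.Ioi 0 =
        ({ω | signChanges a M ω = k'} ∩ a M ⁻¹' Set.Ioi 0) ∩ a (M + 1) ⁻¹' Set.Iio 0 := by
      ext ω
      simp only [hT, Set.mem_inter_iff, Set.mem_setOf_eq, Set.mem_preimage, Set.mem_Ioi,
        Set.mem_Iio, signChanges_succ a M ω]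
      constructor
      · rintro ⟨⟨hsc, hp1⟩, hn0⟩
        rw [if_pos (mul_neg_of_pos_of_neg hn0 hp1)] at hsc
        exact ⟨⟨by omega, hn0⟩, hp1⟩
      · rintro ⟨⟨hsc, hn0⟩, hp1⟩
        exact ⟨⟨by rw [if_pos (mul_neg_of_pos_of_neg hn0 hp1)]; omega, hp1⟩, hn0⟩
    rw [hTP, if_neg (Nat.succ_ne_zero k'),
      indep_last hmeas hindep hM (k' + 1) measurableSet_Iio measurableSet_Iio,
      indep_last hmeas hindep hM k' measurableSet_Ioi measurableSet_Iio]
    ring_nf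
    norm_num
    ring

lemma zero_meas {Ω : Type*} [MeasurableSpace Ω] {μ : Measure Ω} [IsProbabilityMeasure μ]
    {a : ℕ → Ω → ℝ} (hmeas : ∀ i, Measurable (a i)) {α : ℝ} (hα0 : 0 ≤ α) (hα1 : α ≤ 1)
    (i : ℕ) (hp : μ {ω | 0 < a i ω} = ENNReal.ofReal α)
    (hn : μ {ω | a i ω < 0} = ENNReal.ofReal (1 - α)) : μ {ω | a i ω = 0} = 0 := by
  set U : Set Ω := {ω | 0 < a i ω} ∪ {ω | a i ω < 0} with hU
  have hUm : MeasurableSet U :=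
    (measurableSet_Ioi.preimage (hmeas i)).union (measurableSet_Iio.preimage (hmeas i))
  have hdisj : Disjoint {ω | 0 < a i ω} {ω | a i ω < 0} := by
    rw [Set.disjoint_left]
    intro ω h1 h2
    simp only [Set.mem_setOf_eq] at h1 h2
    exact absurd h1 (not_lt.mpr h2.le)
  have hUμ : μ U = 1 := by
    rw [hU, measure_union hdisj (measurableSet_Iio.preimage (hmeas i)), hp, hn,
      ← ENNReal.ofReal_add hα0 (by linarith)]
    norm_num
  have hcompl : μ Uᶜ = 0 := by
    rw [measure_compl hUm (measure_ne_top μ U), hUμ, measure_univ, tsub_self]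
  refine measure_mono_null ?_ hcompl
  intro ω hω
  simp only [Set.mem_setOf_eq] at hω
  simp only [hU, Set.mem_compl_iff, Set.mem_union, Set.mem_setOf_eq, hω]
  norm_num

lemma condProbPos_eq_pAux {Ω : Type*} [MeasurableSpace Ω] {μ : Measure Ω}
    {a : ℕ → Ω → ℝ} (hmeas : ∀ i, Measurable (a i)) {α : ℝ} (hα0 : 0 ≤ α)
    (k N : ℕ) (hp : μ {ω | 0 < a N ω} = ENNReal.ofReal α) :
    condProbPos μ a k N = pAux μ a k N / α := by
  have hm : MeasurableSet {ω | 0 < a N ω} := measurableSet_Ioi.preimage (hmeas N)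
  rw [condProbPos, cond_apply hm, hp, ENNReal.toReal_mul, ENNReal.toReal_inv,
    ENNReal.toReal_ofReal hα0, Set.inter_comm]
  rw [div_eq_inv_mul]
  rfl

lemma condProbNeg_eq_qAux {Ω : Type*} [MeasurableSpace Ω] {μ : Measure Ω}
    {a : ℕ → Ω → ℝ} (hmeas : ∀ i, Measurable (a i)) {β : ℝ} (hβ0 : 0 ≤ β)
    (k N : ℕ) (hn : μ {ω | a N ω < 0} = ENNReal.ofReal β) :
    condProbNeg μ a k N = qAux μ a k N / β := by
  have hm : MeasurableSet {ω | a N ω < 0} := measurableSet_Iio.preimage (hmeas N)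
  rw [condProbNeg, cond_apply hm, hn, ENNReal.toReal_mul, ENNReal.toReal_inv,
    ENNReal.toReal_ofReal hβ0, Set.inter_comm]
  rw [div_eq_inv_mul]
  rfl

lemma pAux_step {Ω : Type*} [MeasurableSpace Ω] {μ : Measure Ω} [IsProbabilityMeasure μ]
    {a : ℕ → Ω → ℝ} (hmeas : ∀ i, Measurable (a i)) {n : ℕ}
    (hindep : iIndepFun (fun i : Fin (n + 1) => a i) μ)
    {α : ℝ} (hα0 : 0 ≤ α) {M : ℕ} (hM : M + 1 ≤ n) (k : ℕ) (hz : μ {ω | a M ω = 0} = 0)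
    (hp : μ {ω | 0 < a (M + 1) ω} = ENNReal.ofReal α) :
    pAux μ a k (M + 1) = (pAux μ a k M + if k = 0 then 0 else qAux μ a (k - 1) M) * α := by
  have hps : μ (a (M + 1) ⁻¹' Set.Ioi 0) = ENNReal.ofReal α := hp
  rw [pAux, step_pos hmeas hindep hM k hz, hps, ENNReal.toReal_mul,
    ENNReal.toReal_ofReal hα0,
    ENNReal.toReal_add (measure_ne_top μ _)
      (by split_ifs
          · exact ENNReal.zero_ne_top
          · exact measure_ne_top μ _),
    apply_ite ENNReal.toReal, ENNReal.toReal_zero]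
  rfl

lemma qAux_step {Ω : Type*} [MeasurableSpace Ω] {μ : Measure Ω} [IsProbabilityMeasure μ]
    {a : ℕ → Ω → ℝ} (hmeas : ∀ i, Measurable (a i)) {n : ℕ}
    (hindep : iIndepFun (fun i : Fin (n + 1) => a i) μ)
    {β : ℝ} (hβ0 : 0 ≤ β) {M : ℕ} (hM : M + 1 ≤ n) (k : ℕ) (hz : μ {ω | a M ω = 0} = 0)
    (hn : μ {ω | a (M + 1) ω < 0} = ENNReal.ofReal β) :
    qAux μ a k (M + 1) = (qAux μ a k M + if k = 0 then 0 else pAux μ a (k - 1) M) * β := by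
  have hns : μ (a (M + 1) ⁻¹' Set.Iio 0) = ENNReal.ofReal β := hn
  rw [qAux, step_neg hmeas hindep hM k hz, hns, ENNReal.toReal_mul,
    ENNReal.toReal_ofReal hβ0,
    ENNReal.toReal_add (measure_ne_top μ _)
      (by split_ifs
          · exact ENNReal.zero_ne_top
          · exact measure_ne_top μ _),
    apply_ite ENNReal.toReal, ENNReal.toReal_zero]
  rfl

/-- Decoupled second-order recursions for the conditional sign-change
probabilities: `u_{k,n} = α(1−α)·(u_{k−2,n−2} − u_{k,n−2}) + u_{k,n−1}` and
`v_{k,n} = α(1−α)·(v_{k−2,n−2} − v_{k,n−2}) + v_{k,n−1}`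
(with the convention `u_{j,·} = v_{j,·} = 0` for `j < 0`). -/
theorem condProb_signChanges_decoupled_recursion
    {Ω : Type*} [MeasurableSpace Ω] (μ : Measure Ω) [IsProbabilityMeasure μ]
    (n : ℕ) (hn : 2 ≤ n) (α : ℝ) (hα : α ∈ Set.Ioo (0 : ℝ) 1) (a : ℕ → Ω → ℝ)
    (hmeas : ∀ i, Measurable (a i))
    (hindep : iIndepFun
      (fun i : Fin (n + 1) => a i) μ)
    (hpos : ∀ i ≤ n, μ {ω | 0 < a i ω} = ENNReal.ofReal α)
    (hneg : ∀ i ≤ n, μ {ω | a i ω < 0} = ENNReal.ofReal (1 - α)) :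
    ∀ k : ℕ,
      condProbPos μ a k n =
        α * (1 - α) * ((if k < 2 then 0 else condProbPos μ a (k - 2) (n - 2)) -
          condProbPos μ a k (n - 2)) + condProbPos μ a k (n - 1) ∧
      condProbNeg μ a k n =
        α * (1 - α) * ((if k < 2 then 0 else condProbNeg μ a (k - 2) (n - 2)) -
          condProbNeg μ a k (n - 2)) + condProbNeg μ a k (n - 1) := by
  obtain ⟨hα0, hα1⟩ := hα
  have hβ0 : (0 : ℝ) < 1 - α := by linarith
  obtain ⟨m, rfl⟩ : ∃ m, n = m + 2 := ⟨n - 2, by omega⟩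
  have hz : ∀ i, i ≤ m + 2 → μ {ω | a i ω = 0} = 0 := fun i hi =>
    zero_meas hmeas hα0.le hα1.le i (hpos i hi) (hneg i hi)
  have hu : ∀ k N, N ≤ m + 2 → condProbPos μ a k N = pAux μ a k N / α := fun k N hN =>
    condProbPos_eq_pAux hmeas hα0.le k N (hpos N hN)
  have hv : ∀ k N, N ≤ m + 2 → condProbNeg μ a k N = qAux μ a k N / (1 - α) := fun k N hN =>
    condProbNeg_eq_qAux hmeas hβ0.le k N (hneg N hN)
  have hP : ∀ k M, M + 1 ≤ m + 2 →
      pAux μ a k (M + 1) = (pAux μ a k M + if k = 0 then 0 else qAux μ a (k - 1) M) * α :=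
    fun k M hM => pAux_step hmeas hindep hα0.le hM k (hz M (by omega)) (hpos (M + 1) hM)
  have hQ : ∀ k M, M + 1 ≤ m + 2 →
      qAux μ a k (M + 1) = (qAux μ a k M + if k = 0 then 0 else pAux μ a (k - 1) M) * (1 - α) :=
    fun k M hM => qAux_step hmeas hindep hβ0.le hM k (hz M (by omega)) (hneg (M + 1) hM)
  have e1 : m + 2 - 1 = m + 1 := rfl
  have e2 : m + 2 - 2 = m := rfl
  intro k
  rw [e1, e2]
  have hαne : α ≠ 0 := hα0.ne'
  have hβne : (1 : ℝ) - α ≠ 0 := hβ0.ne'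
  match k with
  | 0 =>
    have A1 : pAux μ a 0 (m + 2) = pAux μ a 0 (m + 1) * α := by
      simpa using hP 0 (m + 1) (by omega)
    have A2 : pAux μ a 0 (m + 1) = pAux μ a 0 m * α := by
      simpa using hP 0 m (by omega)
    have B1 : qAux μ a 0 (m + 2) = qAux μ a 0 (m + 1) * (1 - α) := by
      simpa using hQ 0 (m + 1) (by omega)
    have B2 : qAux μ a 0 (m + 1) = qAux μ a 0 m * (1 - α) := by
      simpa using hQ 0 m (by omega)
    have keyA : pAux μ a 0 (m + 2) =
        α * (1 - α) * (0 - pAux μ a 0 m) + pAux μ a 0 (m + 1) := by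
      linear_combination A1 + (α - 1) * A2
    have keyB : qAux μ a 0 (m + 2) =
        α * (1 - α) * (0 - qAux μ a 0 m) + qAux μ a 0 (m + 1) := by
      linear_combination B1 - α * B2
    constructor
    · rw [if_pos (by omega), hu 0 (m + 2) le_rfl, hu 0 m (by omega), hu 0 (m + 1) (by omega),
        keyA]
      field_simp
      ring
    · rw [if_pos (by omega), hv 0 (m + 2) le_rfl, hv 0 m (by omega), hv 0 (m + 1) (by omega),
        keyB]
      field_simp
      ring
  | 1 =>
    have A1 : pAux μ a 1 (m + 2) = (pAux μ a 1 (m + 1) + qAux μ a 0 (m + 1)) * α := by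
      simpa using hP 1 (m + 1) (by omega)
    have A2 : pAux μ a 1 (m + 1) = (pAux μ a 1 m + qAux μ a 0 m) * α := by
      simpa using hP 1 m (by omega)
    have A3 : qAux μ a 0 (m + 1) = qAux μ a 0 m * (1 - α) := by
      simpa using hQ 0 m (by omega)
    have B1 : qAux μ a 1 (m + 2) = (qAux μ a 1 (m + 1) + pAux μ a 0 (m + 1)) * (1 - α) := by
      simpa using hQ 1 (m + 1) (by omega)
    have B2 : qAux μ a 1 (m + 1) = (qAux μ a 1 m + pAux μ a 0 m) * (1 - α) := by
      simpa using hQ 1 m (by omega)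
    have B3 : pAux μ a 0 (m + 1) = pAux μ a 0 m * α := by
      simpa using hP 0 m (by omega)
    have keyA : pAux μ a 1 (m + 2) =
        α * (1 - α) * (0 - pAux μ a 1 m) + pAux μ a 1 (m + 1) := by
      linear_combination A1 + α * A3 - (1 - α) * A2
    have keyB : qAux μ a 1 (m + 2) =
        α * (1 - α) * (0 - qAux μ a 1 m) + qAux μ a 1 (m + 1) := by
      linear_combination B1 + (1 - α) * B3 - α * B2
    constructor
    · rw [if_pos (by omega), hu 1 (m + 2) le_rfl, hu 1 m (by omega), hu 1 (m + 1) (by omega),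
        keyA]
      field_simp
      ring
    · rw [if_pos (by omega), hv 1 (m + 2) le_rfl, hv 1 m (by omega), hv 1 (m + 1) (by omega),
        keyB]
      field_simp
      ring
  | (k' + 2) =>
    have A1 : pAux μ a (k' + 2) (m + 2) =
        (pAux μ a (k' + 2) (m + 1) + qAux μ a (k' + 1) (m + 1)) * α := by
      simpa using hP (k' + 2) (m + 1) (by omega)
    have A2 : pAux μ a (k' + 2) (m + 1) =
        (pAux μ a (k' + 2) m + qAux μ a (k' + 1) m) * α := by
      simpa using hP (k' + 2) m (by omega)
    have A3 : qAux μ a (k' + 1) (m + 1) =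
        (qAux μ a (k' + 1) m + pAux μ a k' m) * (1 - α) := by
      simpa using hQ (k' + 1) m (by omega)
    have B1 : qAux μ a (k' + 2) (m + 2) =
        (qAux μ a (k' + 2) (m + 1) + pAux μ a (k' + 1) (m + 1)) * (1 - α) := by
      simpa using hQ (k' + 2) (m + 1) (by omega)
    have B2 : qAux μ a (k' + 2) (m + 1) =
        (qAux μ a (k' + 2) m + pAux μ a (k' + 1) m) * (1 - α) := by
      simpa using hQ (k' + 2) m (by omega)
    have B3 : pAux μ a (k' + 1) (m + 1) =
        (pAux μ a (k' + 1) m + qAux μ a k' m) * α := by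
      simpa using hP (k' + 1) m (by omega)
    have e3 : k' + 2 - 2 = k' := by omega
    have keyA : pAux μ a (k' + 2) (m + 2) =
        α * (1 - α) * (pAux μ a k' m - pAux μ a (k' + 2) m) + pAux μ a (k' + 2) (m + 1) := by
      linear_combination A1 + α * A3 - (1 - α) * A2
    have keyB : qAux μ a (k' + 2) (m + 2) =
        α * (1 - α) * (qAux μ a k' m - qAux μ a (k' + 2) m) + qAux μ a (k' + 2) (m + 1) := by
      linear_combination B1 + (1 - α) * B3 - α * B2
    constructor
    · rw [if_neg (by omega), e3, hu (k' + 2) (m + 2) le_rfl, hu k' m (by omega),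
        hu (k' + 2) m (by omega), hu (k' + 2) (m + 1) (by omega), keyA]
      field_simp
    · rw [if_neg (by omega), e3, hv (k' + 2) (m + 2) le_rfl, hv k' m (by omega),
        hv (k' + 2) m (by omega), hv (k' + 2) (m + 1) (by omega), keyB]
      field_simp
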